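/- Let A be an invertible symmetric n×n real matrix and let S be an n×n real matrix with A * S = S * A. Then for every t ≥ 0, ∫_0^t exp(−(t−s) • A) * S * exp(−(t−s) • Aᵀ) ds = (1/2) * A⁻¹ * (1 − exp(−2t • A)) * S, where exp is the matrix exponential, 1 the identity matrix, and the integral is the entrywise integral over [0,t]. -/

import Mathlib

noncomputable section

open MeasureTheory Matrix NormedSpace

attribute [local instance] Matrix.linftyOpNormedAddCommGroup Matrix.linftyOpNormedRing
  Matrix.linftyOpNormedAlgebra

/-- Covariance integral for the Ornstein–Uhlenbeck process: for `A` invertible symmetric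
commuting with `S`,
`∫_0^t e^{−(t−s)A} S e^{−(t−s)Aᵀ} ds = (1/2) A⁻¹ (1 − e^{−2tA}) S` (entrywise). -/
theorem integral_ou_covariance {n : ℕ} (A : Matrix (Fin n) (Fin n) ℝ)
    (hA : IsUnit A.det) (hAsymm : A.IsSymm)
    (S : Matrix (Fin n) (Fin n) ℝ) (hcomm : A * S = S * A) :
    ∀ t : ℝ, 0 ≤ t → ∀ i j : Fin n,
      ∫ s in (0:ℝ)..t,
          (exp ((-(t - s)) • A) * S * exp ((-(t - s)) • Aᵀ)) i j
        = ((1 / 2 : ℝ) • (A⁻¹ * (1 - exp ((-(2 * t)) • A)) * S)) i j := by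
  intro t ht i j
  have hAt : Aᵀ = A := hAsymm
  have hAinv : A⁻¹ * A = 1 := nonsing_inv_mul A hA
  have hCS : Commute A S := hcomm
  -- rewrite the integrand
  have hint_eq : ∀ s : ℝ,
      exp ((-(t - s)) • A) * S * exp ((-(t - s)) • Aᵀ)
        = exp ((2 * s - 2 * t) • A) * S := by
    intro s
    rw [hAt]
    have hcom : exp ((-(t - s)) • A) * S = S * exp ((-(t - s)) • A) :=
      ((hCS.smul_left (-(t - s))).exp_left).eq
    rw [mul_assoc, ← hcom, ← mul_assoc]
    erw [← exp_add_of_commute (Commute.refl ((-(t - s)) • A)), ← add_smul]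
    congr 2
    rw [show (-(t - s) + -(t - s) : ℝ) = 2 * s - 2 * t by ring]
  -- continuity of the exponential integrand
  have hcont : Continuous fun s : ℝ => exp ((2 * s - 2 * t) • A) * S :=
    (exp_continuous.comp (((continuous_const.mul continuous_id).sub continuous_const).smul
      continuous_const)).mul continuous_const
  -- matrix-valued antiderivative
  set F : ℝ → Matrix (Fin n) (Fin n) ℝ :=
    fun s : ℝ => (1 / 2 : ℝ) • (A⁻¹ * exp ((2 * s - 2 * t) • A) * S) with hF
  have hderiv : ∀ s : ℝ, HasDerivAt F (exp ((2 * s - 2 * t) • A) * S) s := by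
    intro s
    have h1 : HasDerivAt (fun u : ℝ => exp (u • A))
        (A * exp ((2 * s - 2 * t) • A)) (2 * s - 2 * t) :=
      hasDerivAt_exp_smul_const' A (2 * s - 2 * t)
    have h2 : HasDerivAt (fun s : ℝ => 2 * s - 2 * t) 2 s := by
      simpa using ((hasDerivAt_id s).const_mul (2 : ℝ)).sub_const (2 * t)
    have h3 : HasDerivAt (fun s : ℝ => exp ((2 * s - 2 * t) • A))
        ((2 : ℝ) • (A * exp ((2 * s - 2 * t) • A))) s := by
        have h := h1.scomp s h2
        exact h
    have h4 := ((h3.const_mul A⁻¹).mul_const S).const_smul (1 / 2 : ℝ)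
    refine h4.congr_deriv (Eq.symm ?_)
    rw [mul_smul_comm, smul_mul_assoc, smul_smul]
    norm_num
    rw [← mul_assoc, hAinv, one_mul]
  -- the entry map as a continuous linear map
  let E : Matrix (Fin n) (Fin n) ℝ →ₗ[ℝ] ℝ :=
    { toFun := fun M => M i j, map_add' := fun _ _ => rfl, map_smul' := fun _ _ => rfl }
  let Ec : Matrix (Fin n) (Fin n) ℝ →L[ℝ] ℝ := LinearMap.toContinuousLinearMap E
  -- entrywise FTC
  have hderiv' : ∀ s ∈ Set.uIcc (0:ℝ) t, HasDerivAt (fun s : ℝ => Ec (F s))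
      (Ec (exp ((2 * s - 2 * t) • A) * S)) s :=
    fun s _ => Ec.hasFDerivAt.comp_hasDerivAt s (hderiv s)
  have hIint : IntervalIntegrable (fun s : ℝ => Ec (exp ((2 * s - 2 * t) • A) * S))
      volume 0 t := (Ec.continuous.comp hcont).intervalIntegrable 0 t
  have hftc := intervalIntegral.integral_eq_sub_of_hasDerivAt hderiv' hIint
  -- value of the antiderivative difference
  have hval : F t - F 0 = (1 / 2 : ℝ) • (A⁻¹ * (1 - exp ((-(2 * t)) • A)) * S) := by
    rw [hF]
    simp only
    have h0 : (2 * t - 2 * t : ℝ) = 0 := by ring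
    have h1 : (2 * 0 - 2 * t : ℝ) = -(2 * t) := by ring
    rw [h0, h1, zero_smul, exp_zero, ← smul_sub]
    congr 1
    rw [mul_sub, mul_one, sub_mul]
  calc
    (∫ s in (0:ℝ)..t, (exp ((-(t - s)) • A) * S * exp ((-(t - s)) • Aᵀ)) i j)
        = ∫ s in (0:ℝ)..t, Ec (exp ((2 * s - 2 * t) • A) * S) := by
          simp only [hint_eq]; rfl
    _ = Ec (F t) - Ec (F 0) := hftc
    _ = (F t - F 0) i j := rfl
    _ = ((1 / 2 : ℝ) • (A⁻¹ * (1 - exp ((-(2 * t)) • A)) * S)) i j := by rw [hval]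

end
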